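/- Let U be an admissible configuration of size n ≥ 3 and let M be its largest entry. If the singleton {M−1} is not one of the chains of U, then the chain of U containing M has at least two entries, and the collection obtained from U by removing the entry M from that chain is an admissible configuration of size n−1. If the singleton {M−1} is one of the chains of U, then the collection obtained from U by deleting the chain {M−1} is an admissible configuration of size n−1. -/

import Mathlib

/-- The maximum entry of a finite set of integers (`0` for the empty set). -/
def fmax (C : Finset ℤ) : ℤ := C.max.unbotD 0

/-- The minimum entry of a finite set of integers (`0` for the empty set). -/
def fmin (C : Finset ℤ) : ℤ := C.min.untopD 0

/-- A *chain* is a nonempty set of integers of the form `{c, c-2, …, c-2k}`. -/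
def IsChainSet (C : Finset ℤ) : Prop :=
  ∃ (c : ℤ) (k : ℕ), C = (Finset.range (k + 1)).image (fun i : ℕ => c - 2 * (i : ℤ))

/-- Two chains with disjoint entries, with maxima `A, B` and minima `a, b`, are *linked*
if `A > B > a` or `B > A > b`. -/
def LinkedChains (C D : Finset ℤ) : Prop :=
  Disjoint C D ∧
    ((fmax D < fmax C ∧ fmin C < fmax D) ∨ (fmax C < fmax D ∧ fmin D < fmax C))

/-- The set of all entries of a collection of chains. -/
def entriesOf (S : Finset (Finset ℤ)) : Finset ℤ := S.biUnion id

/-- A finite collection of pairwise disjoint chains. -/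
def IsChainCollection (S : Finset (Finset ℤ)) : Prop :=
  (∀ C ∈ S, IsChainSet C) ∧ ∀ C ∈ S, ∀ D ∈ S, C ≠ D → Disjoint C D

/-- A collection of pairwise disjoint chains is *interlaced* if any two of its chains are
joined by a finite sequence of chains of the collection in which consecutive chains are
linked. -/
def Interlaced (S : Finset (Finset ℤ)) : Prop :=
  ∀ C ∈ S, ∀ D ∈ S,
    Relation.ReflTransGen (fun X Y => X ∈ S ∧ Y ∈ S ∧ LinkedChains X Y) C D

/-- An *admissible configuration of size `n`*: an interlaced collection of pairwise disjoint
chains of positive integers with `n` entries in total and smallest entry equal to `1`. -/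
def AdmissibleConfig (n : ℕ) (S : Finset (Finset ℤ)) : Prop :=
  IsChainCollection S ∧ Interlaced S ∧ (entriesOf S).card = n ∧
    (∀ x ∈ entriesOf S, 0 < x) ∧ (1 : ℤ) ∈ entriesOf S

section Helpers

lemma fmax_mem {C : Finset ℤ} (h : C.Nonempty) : fmax C ∈ C := by
  obtain ⟨m, hm⟩ := Finset.max_of_nonempty h
  have := Finset.mem_of_max hm
  simpa [fmax, hm] using this

lemma le_fmax {C : Finset ℤ} {x : ℤ} (h : x ∈ C) : x ≤ fmax C := by
  obtain ⟨m, hm⟩ := Finset.max_of_nonempty ⟨x, h⟩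
  have := Finset.le_max_of_eq h hm
  simpa [fmax, hm] using this

lemma fmin_mem {C : Finset ℤ} (h : C.Nonempty) : fmin C ∈ C := by
  obtain ⟨m, hm⟩ := Finset.min_of_nonempty h
  have := Finset.mem_of_min hm
  simpa [fmin, hm] using this

lemma fmin_le {C : Finset ℤ} {x : ℤ} (h : x ∈ C) : fmin C ≤ x := by
  obtain ⟨m, hm⟩ := Finset.min_of_nonempty ⟨x, h⟩
  have := Finset.min_le_of_eq h hm
  simpa [fmin, hm] using this

lemma eq_singleton_of_fmin_eq_fmax {C : Finset ℤ} (h : C.Nonempty)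
    (he : fmin C = fmax C) : C = {fmax C} := by
  apply Finset.eq_singleton_iff_unique_mem.2
  refine ⟨fmax_mem h, fun x hx => ?_⟩
  have h1 := fmin_le hx
  have h2 := le_fmax hx
  omega

lemma chain_nonempty {C : Finset ℤ} (h : IsChainSet C) : C.Nonempty := by
  obtain ⟨c, k, rfl⟩ := h
  exact ⟨c - 2 * (0:ℕ), Finset.mem_image.2 ⟨0, by simp⟩⟩

lemma chain_card (c : ℤ) (k : ℕ) :
    ((Finset.range (k + 1)).image (fun i : ℕ => c - 2 * (i : ℤ))).card = k + 1 := by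
  rw [Finset.card_image_of_injective _ (fun a b hab => by omega)]
  simp

lemma chain_fmax (c : ℤ) (k : ℕ) :
    fmax ((Finset.range (k + 1)).image (fun i : ℕ => c - 2 * (i : ℤ))) = c := by
  set C := (Finset.range (k + 1)).image (fun i : ℕ => c - 2 * (i : ℤ)) with hC
  have hc : c ∈ C := Finset.mem_image.2 ⟨0, by simp⟩
  have h1 : fmax C ∈ C := fmax_mem ⟨c, hc⟩
  obtain ⟨i, hi, hieq⟩ := Finset.mem_image.1 h1
  have := le_fmax hc
  omega

lemma chain_fmin (c : ℤ) (k : ℕ) :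
    fmin ((Finset.range (k + 1)).image (fun i : ℕ => c - 2 * (i : ℤ))) = c - 2 * k := by
  set C := (Finset.range (k + 1)).image (fun i : ℕ => c - 2 * (i : ℤ)) with hC
  have hc : c - 2 * k ∈ C := Finset.mem_image.2 ⟨k, by simp⟩
  have h1 : fmin C ∈ C := fmin_mem ⟨_, hc⟩
  obtain ⟨i, hi, hieq⟩ := Finset.mem_image.1 h1
  have := fmin_le hc
  simp only [Finset.mem_range] at hi
  omega

lemma chain_erase (c : ℤ) (k : ℕ) :
    ((Finset.range (k + 1)).image (fun i : ℕ => c - 2 * (i : ℤ))).erase c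
      = (Finset.range k).image (fun i : ℕ => (c - 2) - 2 * (i : ℤ)) := by
  ext x
  simp only [Finset.mem_erase, Finset.mem_image, Finset.mem_range]
  constructor
  · rintro ⟨hx, i, hi, rfl⟩
    have hi1 : 1 ≤ i := by by_contra h; interval_cases i; simp_all
    exact ⟨i - 1, by omega, by push_cast [hi1]; omega⟩
  · rintro ⟨i, hi, rfl⟩
    exact ⟨by omega, i + 1, by omega, by push_cast; ring⟩

lemma fmax_singleton (a : ℤ) : fmax {a} = a := by simp [fmax]
lemma fmin_singleton (a : ℤ) : fmin {a} = a := by simp [fmin]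

lemma linked_symm {C D : Finset ℤ} (h : LinkedChains C D) : LinkedChains D C :=
  ⟨h.1.symm, h.2.symm⟩

lemma rtg_map {α : Type*} {r r' : α → α → Prop} (f : α → α)
    (h : ∀ a b, r a b → Relation.ReflTransGen r' (f a) (f b)) {a b : α}
    (hab : Relation.ReflTransGen r a b) : Relation.ReflTransGen r' (f a) (f b) := by
  induction hab with
  | refl => exact .refl
  | tail _ hbc ih => exact ih.trans (h _ _ hbc)

end Helpers

/-- **Reduction step of Proposition 3.9.** Let `U` be an admissible configuration of size
`n ≥ 3` and `M` its largest entry.  If the singleton `{M-1}` is not a chain of `U`, then the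
chain of `U` containing `M` has at least two entries and removing the entry `M` from it
yields an admissible configuration of size `n - 1`; if `{M-1}` is a chain of `U`, then
deleting this chain yields an admissible configuration of size `n - 1`. -/
theorem reduction_step (n : ℕ) (hn : 3 ≤ n) (U : Finset (Finset ℤ))
    (hU : AdmissibleConfig n U) (M : ℤ) (hM : M = fmax (entriesOf U)) :
    (({M - 1} : Finset ℤ) ∉ U →
      ∀ C ∈ U, M ∈ C →
        2 ≤ C.card ∧ AdmissibleConfig (n - 1) (insert (C.erase M) (U.erase C))) ∧
    (({M - 1} : Finset ℤ) ∈ U →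
      AdmissibleConfig (n - 1) (U.erase ({M - 1} : Finset ℤ))) := by
  obtain ⟨⟨hchain, hdisj⟩, hinter, hcard, hpos, h1⟩ := hU
  -- basic facts
  have hent : ∀ x, x ∈ entriesOf U ↔ ∃ D ∈ U, x ∈ D := by
    intro x; simp [entriesOf]
  have hentU : ∀ D ∈ U, ∀ x ∈ D, x ∈ entriesOf U := by
    intro D hD x hx; exact (hent x).2 ⟨D, hD, hx⟩
  have hMmem : M ∈ entriesOf U := hM ▸ fmax_mem ⟨1, h1⟩
  have hleM : ∀ x ∈ entriesOf U, x ≤ M := fun x hx => hM ▸ le_fmax hx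
  -- M ≥ 3
  have hM3 : 3 ≤ M := by
    have hsub : entriesOf U ⊆ Finset.Icc 1 M := by
      intro x hx
      exact Finset.mem_Icc.2 ⟨hpos x hx, hleM x hx⟩
    have := Finset.card_le_card hsub
    rw [hcard, Int.card_Icc] at this
    omega
  -- max of a chain in U is at most M
  have hfmaxle : ∀ D ∈ U, fmax D ≤ M := by
    intro D hD
    exact hleM _ (hentU D hD _ (fmax_mem (chain_nonempty (hchain D hD))))
  constructor
  · -- Case 1 : {M-1} ∉ U
    intro hno C hC hMC
    have hCne : C.Nonempty := ⟨M, hMC⟩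
    -- C has at least two entries
    have hcard2 : 2 ≤ C.card := by
      by_contra hlt
      have hc1 : C.card = 1 := by
        have := Finset.card_pos.2 hCne; omega
      have hCM : C = {M} := by
        obtain ⟨a, ha⟩ := Finset.card_eq_one.1 hc1
        have hMa : M = a := by
          have := hMC; rw [ha] at this; simpa using this
        rw [ha, hMa]
      obtain ⟨D, hD, h1D⟩ := (hent 1).1 h1
      have hDC : D ≠ C := by
        rintro rfl
        rw [hCM] at h1D
        simp at h1D
        omega
      have hpath := hinter C hC D hD
      rcases hpath.cases_head with heq | ⟨Z, ⟨_, hZ, hlink⟩, _⟩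
      · exact hDC heq.symm
      · have h2 := hlink.2
        have hZa : fmax Z ≤ M := hfmaxle Z hZ
        have hfC : fmax C = M := by rw [hCM]; simp [fmax]
        have hmC : fmin C = M := by rw [hCM]; simp [fmin]
        rw [hfC, hmC] at h2
        omega
    refine ⟨hcard2, ?_⟩
    -- chain structure of C
    obtain ⟨c, k, hCeq⟩ := hchain C hC
    have hcM : c = M := by
      have h1' := le_fmax hMC
      have h2' : fmax C = c := by rw [hCeq]; exact chain_fmax c k
      have h3' : fmax C ≤ M := hfmaxle C hC
      omega
    rw [hcM] at hCeq
    have hk1 : 1 ≤ k := by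
      have := chain_card M k
      rw [← hCeq] at this
      omega
    set C' := C.erase M with hC'
    have hC'eq : C' = (Finset.range ((k-1) + 1)).image (fun i : ℕ => (M - 2) - 2 * (i : ℤ)) := by
      have hkk : k - 1 + 1 = k := by omega
      rw [hC', hCeq, chain_erase, hkk]
    have hC'chain : IsChainSet C' := ⟨M - 2, k - 1, hC'eq⟩
    have hC'max : fmax C' = M - 2 := by rw [hC'eq]; exact chain_fmax _ _
    have hC'min : fmin C' = fmin C := by
      rw [hC'eq, chain_fmin, hCeq, chain_fmin]
      omega
    have hCmax : fmax C = M := by rw [hCeq]; exact chain_fmax M k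
    have hCmin : fmin C = M - 2 * k := by rw [hCeq]; exact chain_fmin M k
    have hM2C : M - 2 ∈ C := by
      rw [hCeq]
      exact Finset.mem_image.2 ⟨1, by simp; omega, by push_cast; ring⟩
    have hC'sub : C' ⊆ C := Finset.erase_subset _ _
    have hC'ne : C'.Nonempty := chain_nonempty hC'chain
    have hC'notU : C' ∉ U := by
      intro hmem
      have hne : C' ≠ C := by
        intro he
        have : M ∈ C' := he ▸ hMC
        exact (Finset.notMem_erase M C) this
      have hd := hdisj C' hmem C hC hne
      obtain ⟨x, hx⟩ := hC'ne
      exact (Finset.disjoint_left.1 hd hx) (hC'sub hx)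
    -- key: linked to C implies linked to C'
    have hlink' : ∀ D ∈ U, D ≠ C → LinkedChains C D → LinkedChains C' D := by
      intro D hD hDC ⟨hdj, hor⟩
      have hDne : D.Nonempty := chain_nonempty (hchain D hD)
      have hdjCD : ∀ x ∈ C, x ∉ D := Finset.disjoint_left.1 hdj
      have hfD : fmax D ≤ M := hfmaxle D hD
      have hfDlt : fmax D < M := by
        rcases hor with ⟨h1', h2'⟩ | ⟨h1', h2'⟩
        · omega
        · rw [hCmax] at h1'; omega
      have hminlt : fmin C < fmax D := by
        rcases hor with ⟨h1', h2'⟩ | ⟨h1', h2'⟩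
        · exact h2'
        · rw [hCmax] at h1'; omega
      have hdj' : Disjoint C' D := Finset.disjoint_of_subset_left hC'sub hdj
      have hfDne2 : fmax D ≠ M - 2 := by
        intro he
        exact hdjCD _ hM2C (he ▸ fmax_mem hDne)
      rcases lt_or_gt_of_ne hfDne2 with hlt | hgt
      · exact ⟨hdj', Or.inl ⟨by omega, by rw [hC'min]; omega⟩⟩
      · -- fmax D = c - 1
        have hfDeq : fmax D = M - 1 := by omega
        have hDnotsing : fmin D ≠ fmax D := by
          intro he
          have hsing := eq_singleton_of_fmin_eq_fmax hDne he
          rw [hfDeq] at hsing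
          exact hno (hsing ▸ hD)
        have hminD : fmin D < fmax D := lt_of_le_of_ne (fmin_le (fmax_mem hDne)) hDnotsing
        have hminDne : fmin D ≠ M - 2 := by
          intro he
          exact hdjCD _ hM2C (he ▸ fmin_mem hDne)
        exact ⟨hdj', Or.inr ⟨by omega, by rw [hC'max]; omega⟩⟩
    -- build the new configuration
    set S' := insert C' (U.erase C) with hS'
    have hmemS' : ∀ D ∈ U, D ≠ C → D ∈ S' := by
      intro D hD hne
      exact Finset.mem_insert_of_mem (Finset.mem_erase.2 ⟨hne, hD⟩)
    have hC'S' : C' ∈ S' := Finset.mem_insert_self _ _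
    -- entries
    have hentS' : entriesOf S' = (entriesOf U).erase M := by
      ext x
      simp only [entriesOf, Finset.mem_biUnion, id, Finset.mem_erase]
      constructor
      · rintro ⟨D, hDS, hx⟩
        rcases Finset.mem_insert.1 hDS with rfl | hD
        · have := Finset.mem_erase.1 hx
          exact ⟨this.1, C, hC, this.2⟩
        · obtain ⟨hne, hDU⟩ := Finset.mem_erase.1 hD
          have hMnot : M ∉ D := fun hm =>
            (Finset.disjoint_left.1 (hdisj C hC D hDU (Ne.symm hne)) hMC) hm
          exact ⟨fun he => hMnot (he ▸ hx), D, hDU, hx⟩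
      · rintro ⟨hne, D, hD, hx⟩
        by_cases hDC : D = C
        · subst hDC
          exact ⟨C', Finset.mem_insert_self _ _, Finset.mem_erase.2 ⟨hne, hx⟩⟩
        · exact ⟨D, Finset.mem_insert_of_mem (Finset.mem_erase.2 ⟨hDC, hD⟩), hx⟩
    refine ⟨⟨?_, ?_⟩, ?_, ?_, ?_, ?_⟩
    · -- all chains
      intro D hD
      rcases Finset.mem_insert.1 hD with rfl | hD
      · exact hC'chain
      · exact hchain D (Finset.mem_erase.1 hD).2
    · -- pairwise disjoint
      intro X hX Y hY hne
      rcases Finset.mem_insert.1 hX with rfl | hX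
      · rcases Finset.mem_insert.1 hY with rfl | hY
        · exact absurd rfl hne
        · obtain ⟨hYC, hYU⟩ := Finset.mem_erase.1 hY
          exact Finset.disjoint_of_subset_left hC'sub (hdisj C hC Y hYU (Ne.symm hYC))
      · rcases Finset.mem_insert.1 hY with rfl | hY
        · obtain ⟨hXC, hXU⟩ := Finset.mem_erase.1 hX
          exact Finset.disjoint_of_subset_right hC'sub (hdisj X hXU C hC hXC)
        · exact hdisj X (Finset.mem_erase.1 hX).2 Y (Finset.mem_erase.1 hY).2 hne
    · -- interlaced
      intro X hX Y hY
      -- lift from U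
      set f : Finset ℤ → Finset ℤ := fun Z => if Z = C then C' else Z with hf
      have hstep : ∀ a b, (a ∈ U ∧ b ∈ U ∧ LinkedChains a b) →
          Relation.ReflTransGen
            (fun X Y => X ∈ S' ∧ Y ∈ S' ∧ LinkedChains X Y) (f a) (f b) := by
        rintro a b ⟨ha, hb, hl⟩
        by_cases hac : a = C
        · by_cases hbc : b = C
          · exfalso
            rw [hac, hbc] at hl
            have h0 := hl.1
            rw [disjoint_self] at h0
            rw [h0] at hMC
            simp at hMC
          · have e1 : f a = C' := by simp [hf, hac]
            have e2 : f b = b := by simp [hf, hbc]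
            rw [e1, e2]
            exact Relation.ReflTransGen.single
              ⟨hC'S', hmemS' b hb hbc, hlink' b hb hbc (hac ▸ hl)⟩
        · by_cases hbc : b = C
          · have e1 : f a = a := by simp [hf, hac]
            have e2 : f b = C' := by simp [hf, hbc]
            rw [e1, e2]
            exact Relation.ReflTransGen.single
              ⟨hmemS' a ha hac, hC'S',
                linked_symm (hlink' a ha hac (linked_symm (hbc ▸ hl)))⟩
          · have e1 : f a = a := by simp [hf, hac]
            have e2 : f b = b := by simp [hf, hbc]
            rw [e1, e2]
            exact Relation.ReflTransGen.single ⟨hmemS' a ha hac, hmemS' b hb hbc, hl⟩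
      have hback : ∀ Z ∈ S', ∃ Z₀ ∈ U, f Z₀ = Z := by
        intro Z hZ
        rcases Finset.mem_insert.1 hZ with rfl | hZ
        · exact ⟨C, hC, by simp [hf]⟩
        · obtain ⟨hne, hZU⟩ := Finset.mem_erase.1 hZ
          exact ⟨Z, hZU, by simp [hf, hne]⟩
      obtain ⟨X₀, hX₀, hfX⟩ := hback X hX
      obtain ⟨Y₀, hY₀, hfY⟩ := hback Y hY
      have := rtg_map f hstep (hinter X₀ hX₀ Y₀ hY₀)
      rwa [hfX, hfY] at this
    · -- cardinality
      rw [hentS', Finset.card_erase_of_mem hMmem, hcard]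
    · -- positivity
      intro x hx
      rw [hentS'] at hx
      exact hpos x (Finset.mem_erase.1 hx).2
    · -- 1 is an entry
      rw [hentS']
      exact Finset.mem_erase.2 ⟨by omega, h1⟩
  · -- Case 2 : {M-1} ∈ U
    intro hT
    set T : Finset ℤ := {M - 1} with hTdef
    obtain ⟨C, hC, hMC⟩ := (hent M).1 hMmem
    have hCT : C ≠ T := by
      intro he
      have : M ∈ T := he ▸ hMC
      simp [hTdef] at this
      omega
    -- any chain linked to T equals C
    have hTonly : ∀ D ∈ U, LinkedChains T D → D = C := by
      intro D hD ⟨hdj, hor⟩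
      have hDne : D.Nonempty := chain_nonempty (hchain D hD)
      have hTmax : fmax T = M - 1 := by rw [hTdef, fmax_singleton]
      have hTmin : fmin T = M - 1 := by rw [hTdef, fmin_singleton]
      have hfD : fmax D ≤ M := hfmaxle D hD
      rcases hor with ⟨h1', h2'⟩ | ⟨h1', h2'⟩
      · rw [hTmax] at h1'; rw [hTmin] at h2'; omega
      · rw [hTmax] at h1'
        have hfDM : fmax D = M := by omega
        have hMD : M ∈ D := hfDM ▸ fmax_mem hDne
        by_contra hne
        exact (Finset.disjoint_left.1 (hdisj D hD C hC hne) hMD) hMC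
    set S' := U.erase T with hS'
    have hCS' : C ∈ S' := Finset.mem_erase.2 ⟨hCT, hC⟩
    have hentS' : entriesOf S' = (entriesOf U).erase (M - 1) := by
      ext x
      simp only [entriesOf, Finset.mem_biUnion, id, Finset.mem_erase]
      constructor
      · rintro ⟨D, hD, hx⟩
        obtain ⟨hne, hDU⟩ := Finset.mem_erase.1 hD
        have : M - 1 ∉ D := fun hm =>
          (Finset.disjoint_left.1 (hdisj D hDU T hT hne) hm) (by simp [hTdef])
        exact ⟨fun he => this (he ▸ hx), D, hDU, hx⟩
      · rintro ⟨hne, D, hD, hx⟩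
        have hDT : D ≠ T := by
          intro he
          rw [he, hTdef] at hx
          simp at hx
          exact hne hx
        exact ⟨D, Finset.mem_erase.2 ⟨hDT, hD⟩, hx⟩
    have hTM1 : M - 1 ∈ entriesOf U := hentU T hT (M - 1) (by simp [hTdef])
    refine ⟨⟨?_, ?_⟩, ?_, ?_, ?_, ?_⟩
    · intro D hD; exact hchain D (Finset.mem_erase.1 hD).2
    · intro X hX Y hY hne
      exact hdisj X (Finset.mem_erase.1 hX).2 Y (Finset.mem_erase.1 hY).2 hne
    · -- interlaced
      intro X hX Y hY
      set f : Finset ℤ → Finset ℤ := fun Z => if Z = T then C else Z with hf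
      have hstep : ∀ a b, (a ∈ U ∧ b ∈ U ∧ LinkedChains a b) →
          Relation.ReflTransGen
            (fun X Y => X ∈ S' ∧ Y ∈ S' ∧ LinkedChains X Y) (f a) (f b) := by
        rintro a b ⟨ha, hb, hl⟩
        by_cases hat : a = T
        · by_cases hbt : b = T
          · exfalso
            rw [hat, hbt] at hl
            have h0 := hl.1
            rw [disjoint_self] at h0
            have hm : (M - 1 : ℤ) ∈ T := by rw [hTdef]; simp
            rw [h0] at hm
            simp at hm
          · have hbC : b = C := hTonly b hb (hat ▸ hl)
            have e : f a = f b := by simp [hf, hat, hbt, hbC]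
            rw [e]
        · by_cases hbt : b = T
          · have haC : a = C := hTonly a ha (linked_symm (hbt ▸ hl))
            have e : f a = f b := by simp [hf, hat, hbt, haC]
            rw [e]
          · have e1 : f a = a := by simp [hf, hat]
            have e2 : f b = b := by simp [hf, hbt]
            rw [e1, e2]
            exact Relation.ReflTransGen.single
              ⟨Finset.mem_erase.2 ⟨hat, ha⟩, Finset.mem_erase.2 ⟨hbt, hb⟩, hl⟩
      obtain ⟨hXT, hXU⟩ := Finset.mem_erase.1 hX
      obtain ⟨hYT, hYU⟩ := Finset.mem_erase.1 hY
      have := rtg_map f hstep (hinter X hXU Y hYU)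
      simpa [hf, hXT, hYT] using this
    · rw [hentS', Finset.card_erase_of_mem hTM1, hcard]
    · intro x hx
      rw [hentS'] at hx
      exact hpos x (Finset.mem_erase.1 hx).2
    · rw [hentS']
      exact Finset.mem_erase.2 ⟨by omega, h1⟩
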